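/- Let g be a nonzero homogeneous polynomial of degree d ≥ 1 in n+1 variables with nonnegative coefficients, and p = 1. If w ≥ 0 with ‖w‖₁ = 1 is a local maximum point of g on the ball {z : ‖z‖₁ ≤ 1} and w_j = 0, then −g(w) ≤ (1/d)·∂g/∂z_j(w) ≤ g(w). -/

import Mathlib

open MvPolynomial Finset

-- per-monomial Euler piece
lemma X_mul_pderiv_monomial {σ : Type*} [DecidableEq σ] (i : σ) (s : σ →₀ ℕ) (a : ℝ) :
    X i * pderiv i (monomial s a) = monomial s (a * (s i : ℝ)) := by
  rcases Nat.eq_zero_or_pos (s i) with h | h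
  · simp [h, pderiv_monomial]
  · rw [pderiv_monomial, X, monomial_mul, one_mul,
      add_tsub_cancel_of_le (Finsupp.single_le_iff.mpr h)]

lemma euler {N : ℕ} (d : ℕ) (g : MvPolynomial (Fin N) ℝ) (hhom : g.IsHomogeneous d) :
    ∑ i, X i * pderiv i g = C (d : ℝ) * g := by
  calc ∑ i, X i * pderiv i g
      = ∑ i, ∑ m ∈ g.support, monomial m (coeff m g * (m i : ℝ)) := by
        refine Finset.sum_congr rfl fun i _ => ?_
        conv_lhs => rw [← support_sum_monomial_coeff g]
        rw [map_sum, Finset.mul_sum]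
        exact Finset.sum_congr rfl fun m _ => X_mul_pderiv_monomial i m _
    _ = ∑ m ∈ g.support, monomial m (coeff m g * (d : ℝ)) := by
        rw [Finset.sum_comm]
        refine Finset.sum_congr rfl fun m hm => ?_
        have h1 : (∑ i : Fin N, m i) = d := by
          have h2 := hhom (mem_support_iff.mp hm)
          rw [Pi.one_def, ← Finsupp.degree_eq_weight_one] at h2
          rw [← h2, Finsupp.degree_apply]
          exact (Finset.sum_subset (Finset.subset_univ _)
            (fun x _ hx => Finsupp.notMem_support_iff.mp hx)).symm
        rw [← map_sum, ← Finset.mul_sum, ← Nat.cast_sum, h1]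
    _ = C (d : ℝ) * g := by
        conv_rhs => rw [← support_sum_monomial_coeff g]
        rw [Finset.mul_sum]
        exact Finset.sum_congr rfl fun m _ => by rw [C_mul_monomial, mul_comm]

lemma hasFDerivAt_eval {N : ℕ} (x : Fin N → ℝ) (g : MvPolynomial (Fin N) ℝ) :
    HasFDerivAt (fun z : Fin N → ℝ => MvPolynomial.eval z g)
      (∑ i, MvPolynomial.eval x (MvPolynomial.pderiv i g) •
        (ContinuousLinearMap.proj i : (Fin N → ℝ) →L[ℝ] ℝ)) x := by
  induction g using MvPolynomial.induction_on with
  | C a => simpa using hasFDerivAt_const a x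
  | add p q hp hq =>
      have := hp.add hq
      simp only [map_add, add_smul, Finset.sum_add_distrib]
      exact this
  | mul_X p i hp =>
      have hXi : HasFDerivAt (fun z : Fin N → ℝ => z i)
        (ContinuousLinearMap.proj i : (Fin N → ℝ) →L[ℝ] ℝ) x :=
        hasFDerivAt_apply i x
      have key : (fun z : Fin N → ℝ => eval z (p * X i)) = fun z => eval z p * z i := by
        funext z; simp
      rw [key]
      refine (hp.mul hXi).congr_fderiv (Eq.symm ?_)
      ext v
      simp only [pderiv_mul, map_add, eval_mul, eval_X, pderiv_X, Pi.single_apply,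
        apply_ite (MvPolynomial.eval x), map_one, map_zero, ContinuousLinearMap.add_apply,
        ContinuousLinearMap.coe_sum', Finset.sum_apply, ContinuousLinearMap.coe_smul',
        Pi.smul_apply, ContinuousLinearMap.proj_apply, smul_eq_mul, mul_ite, mul_one,
        mul_zero, ite_mul, zero_mul, add_mul, Finset.sum_add_distrib, Finset.sum_ite_eq',
        Finset.mem_univ, if_true]
      rw [add_comm, Finset.mul_sum]
      congr 1
      · simp
      · exact Finset.sum_congr rfl fun k _ => by ring

theorem stmt13 {n : ℕ} (d : ℕ) (hd : 1 ≤ d)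
    (g : MvPolynomial (Fin (n + 1)) ℝ) (hg : g ≠ 0)
    (hhom : g.IsHomogeneous d) (hcoeff : ∀ mo, 0 ≤ g.coeff mo)
    (w : Fin (n + 1) → ℝ) (hw : ∀ i, 0 ≤ w i)
    (hwn : (∑ i, |w i|) = 1)
    (hmax : IsLocalMaxOn (fun z => MvPolynomial.eval z g)
      {z : Fin (n + 1) → ℝ | (∑ i, |z i|) ≤ 1} w)
    (j : Fin (n + 1)) (hj : w j = 0) :
    -(MvPolynomial.eval w g) ≤ (1 / (d : ℝ)) * MvPolynomial.eval w (MvPolynomial.pderiv j g) ∧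
      (1 / (d : ℝ)) * MvPolynomial.eval w (MvPolynomial.pderiv j g) ≤ MvPolynomial.eval w g := by
  have hsum : (∑ i, w i) = 1 := by
    rw [← hwn]; exact Finset.sum_congr rfl fun i _ => (abs_of_nonneg (hw i)).symm
  have hdpos : (0:ℝ) < d := by exact_mod_cast hd
  -- nonnegativity of evaluations
  have hg0 : 0 ≤ eval w g := by
    rw [MvPolynomial.eval_eq]
    exact Finset.sum_nonneg fun m _ => mul_nonneg (hcoeff m)
      (Finset.prod_nonneg fun i _ => pow_nonneg (hw i) _)
  have hpd0 : 0 ≤ eval w (pderiv j g) := by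
    rw [show (pderiv j) g = ∑ m ∈ g.support, pderiv j (monomial m (coeff m g)) by
      rw [← map_sum, support_sum_monomial_coeff], map_sum]
    refine Finset.sum_nonneg fun m _ => ?_
    rw [pderiv_monomial, eval_monomial]
    refine mul_nonneg (mul_nonneg (hcoeff m) (Nat.cast_nonneg _)) ?_
    exact Finset.prod_nonneg fun i _ => pow_nonneg (hw i) _
  -- Euler identity evaluated at w
  have heuler : ∑ i, w i * eval w (pderiv i g) = (d:ℝ) * eval w g := by
    have h := congrArg (eval w) (euler d g hhom)
    simpa using h
  -- local max gives directional derivative inequality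
  set s : Set (Fin (n+1) → ℝ) := {z : Fin (n + 1) → ℝ | (∑ i, |z i|) ≤ 1} with hs
  set e : Fin (n+1) → ℝ := fun i => if i = j then 1 else 0 with he
  have he1 : (∑ i, e i) = 1 := by simp [he]
  have hseg : segment ℝ w e ⊆ s := by
    rintro z ⟨a, b, ha, hb, hab, rfl⟩
    have hz : ∀ i, 0 ≤ (a • w + b • e) i := by
      intro i
      have h0 : (0:ℝ) ≤ e i := by rw [he]; dsimp only; split <;> norm_num
      simp only [Pi.add_apply, Pi.smul_apply, smul_eq_mul]
      exact add_nonneg (mul_nonneg ha (hw i)) (mul_nonneg hb h0)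
    simp only [hs, Set.mem_setOf_eq]
    rw [Finset.sum_congr rfl fun i _ => abs_of_nonneg (hz i)]
    simp only [Pi.add_apply, Pi.smul_apply, smul_eq_mul]
    rw [Finset.sum_add_distrib, ← Finset.mul_sum, ← Finset.mul_sum, hsum, he1]
    simp [hab]
  have hcone : (e - w) ∈ posTangentConeAt s w :=
    sub_mem_posTangentConeAt_of_segment_subset hseg
  have hle := hmax.hasFDerivWithinAt_nonpos (hasFDerivAt_eval w g).hasFDerivWithinAt hcone
  have happ : (∑ i, eval w (pderiv i g) •
      (ContinuousLinearMap.proj i : (Fin (n+1) → ℝ) →L[ℝ] ℝ)) (e - w)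
      = eval w (pderiv j g) - (d:ℝ) * eval w g := by
    rw [← heuler]
    simp only [ContinuousLinearMap.coe_sum', Finset.sum_apply,
      ContinuousLinearMap.coe_smul', Pi.smul_apply, ContinuousLinearMap.proj_apply,
      smul_eq_mul, Pi.sub_apply, mul_sub]
    rw [Finset.sum_sub_distrib]
    congr 1
    · simp [he, mul_ite, Finset.sum_ite_eq']
    · exact Finset.sum_congr rfl fun i _ => mul_comm _ _
  rw [happ] at hle
  constructor
  · have h1 : 0 ≤ (1 / (d:ℝ)) * eval w (pderiv j g) :=
      mul_nonneg (by positivity) hpd0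
    linarith
  · rw [one_div, inv_mul_le_iff₀ hdpos]
    linarith
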